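/- Let α ∈ (0,1), m ≥ 1, c > 0, and suppose r: [0,∞) → ℝ satisfies 0 < r(x) ≤ 1 and |(1+x)^{-α} - r(x)| ≤ c x^{2m+1} for all x ∈ [0,1]. Let δ > 0, λ ∈ [δ·2, ∞), N ≥ 1 a positive integer, k_N = 1/N, t_n = n k_N, and θ_n = k_N(λ-δ)/(δ + t_{n-1}(λ-δ)). Then for all 1 < p ≤ q ≤ N, ∏_{n=p}^{q} r(θ_n) ≤ C ∏_{n=p}^{q} (1+θ_n)^{-α}, where C = ∏_{j=1}^{∞} (1 + 2^α c j^{-2m-1}) < ∞. -/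

import Mathlib

open Real Finset


open Filter in
lemma aux_prod_le_tprod (f : ℕ → ℝ) (hf : ∀ j, 1 ≤ f j) (hm : Multipliable f)
    (s : Finset ℕ) : ∏ j ∈ s, f j ≤ ∏' j, f j := by
  refine ge_of_tendsto hm.hasProd (Filter.eventually_atTop.2 ⟨s, fun t hst => ?_⟩)
  rw [← Finset.prod_sdiff hst]
  have h1 : (1:ℝ) ≤ ∏ j ∈ t \ s, f j := by
    calc (1:ℝ) = ∏ _j ∈ t \ s, (1:ℝ) := by simp
      _ ≤ ∏ j ∈ t \ s, f j :=
        Finset.prod_le_prod (fun i _ => zero_le_one) (fun i _ => hf i)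
  have h2 : (0:ℝ) ≤ ∏ j ∈ s, f j :=
    Finset.prod_nonneg (fun i _ => le_trans zero_le_one (hf i))
  nlinarith

theorem stmt_9 (α : ℝ) (hα : α ∈ Set.Ioo (0:ℝ) 1) (m : ℕ) (hm : 1 ≤ m)
    (c : ℝ) (hc : 0 < c) (r : ℝ → ℝ)
    (hr1 : ∀ x : ℝ, 0 ≤ x → 0 < r x ∧ r x ≤ 1)
    (hr2 : ∀ x ∈ Set.Icc (0:ℝ) 1, |(1 + x) ^ (-α) - r x| ≤ c * x ^ (2 * m + 1))
    (δ lam : ℝ) (hδ : 0 < δ) (hlam : 2 * δ ≤ lam)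
    (N : ℕ) (hN : 1 ≤ N)
    (θ : ℕ → ℝ)
    (hθ : ∀ n : ℕ, θ n = (1 / N) * (lam - δ) / (δ + (((n : ℝ) - 1) / N) * (lam - δ))) :
    Multipliable (fun j : ℕ => (1 + 2 ^ α * c * ((j : ℝ) + 1) ^ (-(2 * (m : ℝ) + 1)))) ∧
    ∀ p q : ℕ, 1 < p → p ≤ q → q ≤ N →
      ∏ n ∈ Finset.Icc p q, r (θ n)
        ≤ (∏' j : ℕ, (1 + 2 ^ α * c * ((j : ℝ) + 1) ^ (-(2 * (m : ℝ) + 1)))) *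
          ∏ n ∈ Finset.Icc p q, (1 + θ n) ^ (-α) := by
  obtain ⟨hα0, hα1⟩ := hα
  set s : ℝ := 2 * (m : ℝ) + 1 with hs
  set g : ℕ → ℝ := fun j => 2 ^ α * c * ((j : ℝ) + 1) ^ (-s) with hg
  have hg0 : ∀ j, 0 ≤ g j := by
    intro j
    have : (0:ℝ) < ((j:ℝ)+1) ^ (-s) := Real.rpow_pos_of_pos (by positivity) _
    positivity
  have hgsum : Summable g := by
    have h1 : Summable (fun n : ℕ => (n : ℝ) ^ (-s)) := by
      apply Real.summable_nat_rpow.2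
      have : (1:ℝ) ≤ (m:ℝ) := by exact_mod_cast hm
      simp only [hs]; linarith
    have h2 : Summable (fun j : ℕ => ((j + 1 : ℕ) : ℝ) ^ (-s)) :=
      (summable_nat_add_iff 1).2 h1
    have h3 : Summable (fun j : ℕ => ((j : ℝ) + 1) ^ (-s)) := by
      convert h2 using 2 with j; push_cast; ring_nf
    exact h3.mul_left _
  have hf1 : ∀ j, (1:ℝ) ≤ 1 + g j := fun j => le_add_of_nonneg_right (hg0 j)
  have hmul : Multipliable (fun j : ℕ => (1 + 2 ^ α * c * ((j : ℝ) + 1) ^ (-(2 * (m : ℝ) + 1)))) := by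
    exact Real.multipliable_one_add_of_summable hgsum
  refine ⟨hmul, ?_⟩
  intro p q hp hpq hqN
  have hNpos : (0:ℝ) < (N:ℝ) := by exact_mod_cast hN
  have hld : δ ≤ lam - δ := by linarith
  have hldpos : (0:ℝ) < lam - δ := lt_of_lt_of_le hδ hld
  have hθpos : ∀ n ∈ Finset.Icc p q, 0 < θ n := by
    intro n hn
    rw [Finset.mem_Icc] at hn
    have hn2 : 2 ≤ n := lt_of_lt_of_le hp hn.1
    have hnR : (1:ℝ) ≤ (n:ℝ) - 1 := by
      have : (2:ℝ) ≤ (n:ℝ) := by exact_mod_cast hn2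
      linarith
    rw [hθ n]
    have : (0:ℝ) ≤ (((n : ℝ) - 1) / N) * (lam - δ) := by positivity
    positivity
  -- per-term estimate
  have key : ∀ n ∈ Finset.Icc p q,
      r (θ n) ≤ (1 + g (n - 2)) * (1 + θ n) ^ (-α) := by
    intro n hn
    have hxpos := hθpos n hn
    rw [Finset.mem_Icc] at hn
    have hn2 : 2 ≤ n := lt_of_lt_of_le hp hn.1
    have hnR : (1:ℝ) ≤ (n:ℝ) - 1 := by
      have : (2:ℝ) ≤ (n:ℝ) := by exact_mod_cast hn2
      linarith
    set x := θ n with hx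
    have hden : (0:ℝ) < δ + (((n : ℝ) - 1) / N) * (lam - δ) := by
      have : (0:ℝ) ≤ (((n : ℝ) - 1) / N) * (lam - δ) := by positivity
      linarith
    have hxle : x ≤ 1 / ((n:ℝ) - 1) := by
      rw [hx, hθ n]
      rw [div_le_div_iff₀ hden (by linarith)]
      have heq : 1 / (N:ℝ) * (lam - δ) * ((n:ℝ) - 1)
          = ((n:ℝ) - 1) / N * (lam - δ) := by ring
      rw [heq, one_mul]
      linarith
    have hx1 : x ≤ 1 := hxle.trans (by
      rw [div_le_one (by linarith)]; exact hnR)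
    have habs := hr2 x ⟨hxpos.le, hx1⟩
    have hrle : r x ≤ (1 + x) ^ (-α) + c * x ^ (2 * m + 1) := by
      have h := abs_le.1 habs
      linarith [h.1]
    have hxpow : x ^ (2 * m + 1) ≤ (((n:ℝ) - 1) ^ (2 * m + 1))⁻¹ := by
      calc x ^ (2*m+1) ≤ (1 / ((n:ℝ)-1)) ^ (2*m+1) :=
            pow_le_pow_left₀ hxpos.le hxle _
        _ = (((n:ℝ) - 1) ^ (2 * m + 1))⁻¹ := by
            rw [div_pow, one_pow, one_div]
    have hbase : (0:ℝ) < 1 + x := by linarith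
    have h2α : (1 + x) ^ α ≤ 2 ^ α :=
      Real.rpow_le_rpow (by linarith) (by linarith) hα0.le
    have hinv : (1:ℝ) ≤ (1 + x) ^ (-α) * 2 ^ α := by
      rw [Real.rpow_neg hbase.le]
      rw [inv_mul_eq_div, le_div_iff₀ (Real.rpow_pos_of_pos hbase α), one_mul]
      exact h2α
    have hgn : g (n - 2) = 2 ^ α * c * (((n:ℝ) - 1) ^ (2 * m + 1))⁻¹ := by
      have hcast : ((n - 2 : ℕ) : ℝ) + 1 = (n:ℝ) - 1 := by
        have h := Nat.cast_sub hn2 (R := ℝ)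
        push_cast at h ⊢
        linarith
      rw [hg]
      simp only [hcast]
      rw [Real.rpow_neg (by linarith), ← Real.rpow_natCast ((n:ℝ)-1) (2*m+1)]
      rw [hs]; norm_cast
    calc r x ≤ (1 + x) ^ (-α) + c * x ^ (2 * m + 1) := hrle
      _ ≤ (1 + x) ^ (-α) + (1 + x) ^ (-α) * 2 ^ α * (c * (((n:ℝ) - 1) ^ (2 * m + 1))⁻¹) := by
          have h3 : c * x ^ (2*m+1) ≤ c * (((n:ℝ)-1)^(2*m+1))⁻¹ :=
            mul_le_mul_of_nonneg_left hxpow hc.le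
          have h4 : c * (((n:ℝ)-1)^(2*m+1))⁻¹
              ≤ (1 + x) ^ (-α) * 2 ^ α * (c * (((n:ℝ)-1)^(2*m+1))⁻¹) :=
            le_mul_of_one_le_left (by positivity) hinv
          linarith
      _ = (1 + g (n - 2)) * (1 + x) ^ (-α) := by rw [hgn]; ring
  have hprod1 : ∏ n ∈ Finset.Icc p q, r (θ n)
      ≤ ∏ n ∈ Finset.Icc p q, (1 + g (n - 2)) * (1 + θ n) ^ (-α) :=
    Finset.prod_le_prod (fun n hn => (hr1 (θ n) (hθpos n hn).le).1.le) key
  have hsplit : ∏ n ∈ Finset.Icc p q, (1 + g (n - 2)) * (1 + θ n) ^ (-α)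
      = (∏ n ∈ Finset.Icc p q, (1 + g (n - 2))) *
        ∏ n ∈ Finset.Icc p q, (1 + θ n) ^ (-α) :=
    Finset.prod_mul_distrib
  have hreindex : ∏ n ∈ Finset.Icc p q, (1 + g (n - 2))
      = ∏ j ∈ (Finset.Icc p q).image (· - 2), (1 + g j) := by
    rw [Finset.prod_image]
    intro a ha b hb hab
    rw [Finset.mem_coe, Finset.mem_Icc] at ha hb
    have : 2 ≤ a := lt_of_lt_of_le hp ha.1
    have : 2 ≤ b := lt_of_lt_of_le hp hb.1
    simp only at hab
    omega
  have hfun : (fun j : ℕ => 1 + 2 ^ α * c * ((j : ℝ) + 1) ^ (-(2 * (m : ℝ) + 1)))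
      = fun j : ℕ => 1 + g j := by
    funext j
    simp only [hg, hs]
  rw [hfun]
  have hmul' : Multipliable fun j : ℕ => 1 + g j := by rw [← hfun]; exact hmul
  have htp : ∏ j ∈ (Finset.Icc p q).image (· - 2), (1 + g j)
      ≤ ∏' j : ℕ, (1 + g j) :=
    aux_prod_le_tprod _ hf1 hmul' _
  have hnn : (0:ℝ) ≤ ∏ n ∈ Finset.Icc p q, (1 + θ n) ^ (-α) :=
    Finset.prod_nonneg (fun n hn =>
      (Real.rpow_pos_of_pos (by linarith [hθpos n hn]) _).le)
  calc ∏ n ∈ Finset.Icc p q, r (θ n)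
      ≤ (∏ n ∈ Finset.Icc p q, (1 + g (n - 2))) *
        ∏ n ∈ Finset.Icc p q, (1 + θ n) ^ (-α) := by rw [← hsplit]; exact hprod1
    _ ≤ (∏' j : ℕ, (1 + g j)) * ∏ n ∈ Finset.Icc p q, (1 + θ n) ^ (-α) := by
        apply mul_le_mul_of_nonneg_right _ hnn
        rw [hreindex]; exact htp
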